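/- Let 𝒞 be a variety of L-algebras, A ∈ 𝒞, and B a subalgebra of A. Let B* be the set of all elements of A of the form W₁(w₁₁(x₁),…,w₁ₘ(xₘ)), where {W_i, w_ij} ranges over all equational arrays in 𝒞 (of all sizes m and all signatures (n₁,…,n_m)) and the tuples x_j = (x_{j1},…,x_{jn_j}) of elements of A satisfy w_ii(x_i) ∈ B for all i = 1,…,m. Then B ⊆ B* ⊆ dom_A^𝒞(B), and B* is a subalgebra of A (it contains all constants and is closed under every operation of L). -/

import Mathlib

open FirstOrder Language

universe u v w x

open Classical in
/-- Transferability of a set of variables. -/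
def Transferable {L : FirstOrder.Language.{u, v}} (T : L.Theory) {A : Type w} [L.Structure A]
    (B : L.Substructure A) {S : Type x} (W : L.Term S) (xs : S → A) (t : Set S) : Prop :=
  ∀ S₁ S₂ : Set S, Disjoint S₁ t → Disjoint S₁ S₂ → Disjoint t S₂ →
    S₁ ∪ t ∪ S₂ = Set.univ →
    ∀ (C : Type (max u v w)) [L.Structure C] [T.Model C], ∀ f g : A →[L] C,
      (∀ b ∈ B, f b = g b) →
      Term.realize (fun s => if s ∈ S₁ ∪ t then f (xs s) else g (xs s)) W =
      Term.realize (fun s => if s ∈ S₁ then f (xs s) else g (xs s)) W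

/-- The dominion of a subalgebra `B` of `A` in the variety of models of `T`. -/
def Dominion {L : FirstOrder.Language.{u, v}} (T : L.Theory) {A : Type w} [L.Structure A]
    (B : L.Substructure A) : Set A :=
  {a : A | ∀ (C : Type (max u v w)) [L.Structure C] [T.Model C], ∀ f g : A →[L] C,
    (∀ b ∈ B, f b = g b) → f a = g a}

/-- Equational array in the variety of models of `T` (size `m`, signature `n`). -/
def IsEquationalArray {L : FirstOrder.Language.{u, v}} (T : L.Theory) (m : ℕ)
    (n : Fin m → ℕ) (W : Fin m → L.Term (Fin m))
    (w : Fin m → (j : Fin m) → L.Term (Fin (n j))) : Prop :=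
  ∀ (C : Type (max u v)) [L.Structure C] [T.Model C],
    ∀ (x : (j : Fin m) → Fin (n j) → C) (i i' : Fin m),
      (W i).realize (fun j => (w i j).realize (x j)) =
      (W i').realize (fun j => (w i' j).realize (x j))

/-- `B*` : the set of all elements of `A` of the form
`W 0 (w 0 0 (x 0), …, w 0 (m-1) (x (m-1)))`, where `{W i, w i j}` ranges over all
equational arrays in the variety (of all sizes and signatures) and the tuples `x j` of
elements of `A` satisfy `w i i (x i) ∈ B` for all `i`. -/
def Bstar {L : FirstOrder.Language.{u, v}} (T : L.Theory) {A : Type w} [L.Structure A]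
    (B : L.Substructure A) : Set A :=
  {a : A | ∃ (m : ℕ) (hm : 0 < m) (n : Fin m → ℕ) (W : Fin m → L.Term (Fin m))
      (w : Fin m → (j : Fin m) → L.Term (Fin (n j))) (x : (j : Fin m) → Fin (n j) → A),
    IsEquationalArray T m n W w ∧ (∀ i : Fin m, (w i i).realize (x i) ∈ B) ∧
    a = (W ⟨0, hm⟩).realize (fun j => (w ⟨0, hm⟩ j).realize (x j))}

/-- Auxiliary: transfer the equational-array identity to models in any universe. -/
theorem IsEquationalArray.realize_eq' {L : FirstOrder.Language.{u, v}} {T : L.Theory} {m : ℕ}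
    {n : Fin m → ℕ} {W : Fin m → L.Term (Fin m)}
    {w : Fin m → (j : Fin m) → L.Term (Fin (n j))}
    (harr : IsEquationalArray T m n W w)
    (C : Type x) [L.Structure C] [T.Model C] [Nonempty C]
    (xv : (j : Fin m) → Fin (n j) → C) (i i' : Fin m) :
    (W i).realize (fun j => (w i j).realize (xv j)) =
    (W i').realize (fun j => (w i' j).realize (xv j)) := by
  classical
  set t : Fin m → L.Term ((j : Fin m) × Fin (n j)) :=
    fun i => (W i).subst (fun j => (w i j).relabel (fun s => ⟨j, s⟩)) with ht
  have hmod : T ⊨ᵇ Term.equal (t i) (t i') := by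
    refine Theory.models_formula_iff.2 fun M vv => ?_
    simp only [Formula.realize_equal, ht, Term.realize_subst, Term.realize_relabel]
    exact harr M (fun j s => vv ⟨j, s⟩) i i'
  have h2 := hmod.realize_formula C (v := fun p => xv p.1 p.2)
  simpa only [Formula.realize_equal, ht, Term.realize_subst, Term.realize_relabel,
    Function.comp, Function.comp_def] using h2

/-- Auxiliary: any element of `B*` has witnessing arrays of every sufficiently large
size `M` and constant signature `N`. -/
theorem exists_normal_array {L : FirstOrder.Language.{u, v}} {T : L.Theory} {A : Type w}
    [L.Structure A] {B : L.Substructure A} {a : A} (ha : a ∈ Bstar T B) :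
    ∃ m₀ N₀ : ℕ, 0 < m₀ ∧ ∀ M N : ℕ, m₀ ≤ M → N₀ ≤ N →
      ∃ (W : Fin M → L.Term (Fin M)) (w : Fin M → Fin M → L.Term (Fin N))
        (x : Fin M → Fin N → A),
        IsEquationalArray T M (fun _ => N) W w ∧
        (∀ i, (w i i).realize (x i) ∈ B) ∧
        ∀ h0 : 0 < M, a = (W ⟨0, h0⟩).realize (fun j => (w ⟨0, h0⟩ j).realize (x j)) := by
  classical
  obtain ⟨m, hm, n, W, w, x, harr, hdiag, hval⟩ := ha
  refine ⟨m, Finset.univ.sup n, hm, fun M N hM hN => ?_⟩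
  have hle : ∀ j : Fin m, n j ≤ N := fun j =>
    le_trans (Finset.le_sup (Finset.mem_univ j)) hN
  set g : (j : Fin m) → Fin (n j) → Fin N :=
    fun j s => ⟨s.1, lt_of_lt_of_le s.2 (hle j)⟩ with hg
  set w₁ : Fin m → Fin m → L.Term (Fin N) := fun i j => (w i j).relabel (g j) with hw₁
  set x₁ : Fin m → Fin N → A :=
    fun j t => if h : t.1 < n j then x j ⟨t.1, h⟩ else a with hx₁
  have hx₁g : ∀ j : Fin m, (x₁ j) ∘ (g j) = x j := by
    intro j; funext s; simp [hx₁, hg]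
  set r : Fin M → Fin m := fun i => ⟨min i.1 (m - 1), by omega⟩ with hr
  set emb : Fin m → Fin M := fun j => ⟨j.1, lt_of_lt_of_le j.2 hM⟩ with hemb
  have hre : ∀ j : Fin m, r (emb j) = j := by
    intro j; simp only [hr, hemb]; ext; simp; omega
  refine ⟨fun i => (W (r i)).relabel emb, fun i j => w₁ (r i) (r j), fun j => x₁ (r j),
    ?_, ?_, ?_⟩
  · intro C _ _ y i i'
    have key : ∀ ρ : Fin m,
        ((W ρ).relabel emb).realize (fun q => (w₁ ρ (r q)).realize (y q)) =
        (W ρ).realize (fun j => (w ρ j).realize ((y (emb j)) ∘ (g j))) := by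
      intro ρ
      rw [Term.realize_relabel]
      congr 1
      funext j
      simp only [Function.comp, hre, hw₁, Term.realize_relabel]
    rw [key (r i), key (r i')]
    exact harr C (fun j => (y (emb j)) ∘ (g j)) (r i) (r i')
  · intro i
    have : (w₁ (r i) (r i)).realize (x₁ (r i)) = (w (r i) (r i)).realize (x (r i)) := by
      rw [hw₁]; rw [Term.realize_relabel, hx₁g]
    rw [this]; exact hdiag (r i)
  · intro h0
    have hr0 : r ⟨0, h0⟩ = ⟨0, hm⟩ := by ext; simp [hr]
    have key : ((W (r ⟨0, h0⟩)).relabel emb).realize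
        (fun q => (w₁ (r ⟨0, h0⟩) (r q)).realize (x₁ (r q))) =
        (W ⟨0, hm⟩).realize (fun j => (w ⟨0, hm⟩ j).realize (x j)) := by
      rw [hr0, Term.realize_relabel]
      congr 1
      funext j
      simp only [Function.comp, hre, hw₁, Term.realize_relabel, hx₁g]
    rw [key]; exact hval

/-- `B ⊆ B* ⊆ dom_A(B)`, and `B*` is a subalgebra of `A`: it contains all constants
and is closed under every operation of `L` (constants being the nullary operations). -/
theorem bstar_subalgebra_between {L : FirstOrder.Language.{u, v}} (T : L.Theory)
    {A : Type w} [L.Structure A] [T.Model A] (B : L.Substructure A) :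
    (B : Set A) ⊆ Bstar T B ∧ Bstar T B ⊆ Dominion T B ∧
    (∀ (k : ℕ) (F : L.Functions k) (a : Fin k → A),
      (∀ i : Fin k, a i ∈ Bstar T B) → Structure.funMap F a ∈ Bstar T B) := by
  classical
  have hBsub : (B : Set A) ⊆ Bstar T B := by
    intro b hb
    refine ⟨1, one_pos, fun _ => 1, fun _ => Term.var 0, fun _ _ => Term.var 0,
      fun _ _ => b, ?_, ?_, ?_⟩
    · intro C _ _ xv i i'
      have : i = i' := Subsingleton.elim i i'
      rw [this]
    · intro i; simpa [Term.realize] using hb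
    · simp [Term.realize]
  refine ⟨hBsub, ?_, ?_⟩
  · -- Bstar ⊆ Dominion
    rintro a ⟨m, hm, n, W, w, x, harr, hdiag, hval⟩
    intro C _ _ f g hfg
    haveI : Nonempty C := ⟨f a⟩
    set i₀ : Fin m := ⟨0, hm⟩ with hi₀
    set V : ((j : Fin m) → Fin (n j) → C) → C :=
      fun y => (W i₀).realize (fun j => (w i₀ j).realize (y j)) with hV
    have hrow : ∀ (i : Fin m) (z : (j : Fin m) → Fin (n j) → C),
        V z = (W i).realize (fun j => (w i j).realize (z j)) :=
      fun i z => harr.realize_eq' C z i₀ i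
    have push : ∀ (h : A →[L] C),
        h ((W i₀).realize (fun j => (w i₀ j).realize (x j))) =
        V (fun j => ⇑h ∘ x j) := by
      intro h
      show h _ = (W i₀).realize (fun j => (w i₀ j).realize (⇑h ∘ x j))
      rw [show (fun j => (w i₀ j).realize (⇑h ∘ x j)) =
        ⇑h ∘ (fun j => (w i₀ j).realize (x j)) from
        funext fun j => HomClass.realize_term h, HomClass.realize_term]
    set y : ℕ → (j : Fin m) → Fin (n j) → C :=
      fun r j => if (j : ℕ) < r then g ∘ x j else f ∘ x j with hy
    have hy0 : y 0 = fun j => f ∘ x j := by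
      funext j; simp [hy]
    have hym : y m = fun j => g ∘ x j := by
      funext j; simp [hy, j.2]
    have hstep : ∀ r < m, V (y r) = V (y (r + 1)) := by
      intro r hr
      rw [hrow ⟨r, hr⟩ (y r), hrow ⟨r, hr⟩ (y (r + 1))]
      congr 1
      funext j
      by_cases hj : (j : ℕ) = r
      · have hjr : j = ⟨r, hr⟩ := Fin.ext hj
        have h1 : y r j = ⇑f ∘ x j := by simp [hy, hj]
        have h2 : y (r + 1) j = ⇑g ∘ x j := by simp [hy, hj]
        rw [h1, h2, HomClass.realize_term, HomClass.realize_term, hjr]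
        exact hfg _ (hdiag ⟨r, hr⟩)
      · have : ((j : ℕ) < r) ↔ ((j : ℕ) < r + 1) := by omega
        have h12 : y r j = y (r + 1) j := by
          simp only [hy]
          by_cases h : (j : ℕ) < r
          · rw [if_pos h, if_pos (by omega)]
          · rw [if_neg h, if_neg (by omega)]
        rw [h12]
    have hchain : ∀ r ≤ m, V (y 0) = V (y r) := by
      intro r
      induction r with
      | zero => intro _; rfl
      | succ s ih => intro hs; rw [ih (by omega), hstep s (by omega)]
    have hfa : f a = V (y 0) := by rw [hval, push f, hy0]
    have hga : g a = V (y m) := by rw [hval, push g, hym]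
    rw [hfa, hga]
    exact hchain m le_rfl
  · -- closure under operations
    intro k F a haB
    rcases Nat.eq_zero_or_pos k with hk0 | hk
    · subst hk0
      exact hBsub (B.fun_mem F a (fun i => i.elim0))
    · -- choose normalized arrays of a common size and signature
      have hnorm := fun c => exists_normal_array (haB c)
      choose m₀ N₀ hpos hspec using hnorm
      set Mb : ℕ := Finset.univ.sup m₀ with hMb
      set Nb : ℕ := Finset.univ.sup N₀ with hNb
      have hMbpos : 0 < Mb :=
        lt_of_lt_of_le (hpos ⟨0, hk⟩) (Finset.le_sup (Finset.mem_univ _))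
      have H : ∀ c : Fin k,
          ∃ (W : Fin Mb → L.Term (Fin Mb)) (w : Fin Mb → Fin Mb → L.Term (Fin Nb))
            (x : Fin Mb → Fin Nb → A),
            IsEquationalArray T Mb (fun _ => Nb) W w ∧
            (∀ i, (w i i).realize (x i) ∈ B) ∧
            ∀ h0 : 0 < Mb,
              a c = (W ⟨0, h0⟩).realize (fun j => (w ⟨0, h0⟩ j).realize (x j)) :=
        fun c => hspec c Mb Nb (Finset.le_sup (Finset.mem_univ _))
          (Finset.le_sup (Finset.mem_univ _))
      choose W w x harr hdiag hval using H
      set e : Fin k × Fin Mb ≃ Fin (k * Mb) := finProdFinEquiv with he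
      set d : Fin (k * Mb) → Fin k × Fin Mb := fun p => e.symm p with hd
      have hMt : 0 < k * Mb := Nat.mul_pos hk hMbpos
      set z0 : Fin Mb := ⟨0, hMbpos⟩ with hz0
      set row : Fin (k * Mb) → Fin k → Fin Mb :=
        fun p c => if (d p).1 = c then (d p).2 else z0 with hrowdef
      refine ⟨k * Mb, hMt, fun _ => Nb,
        fun p => Term.func F (fun c => (W c (row p c)).relabel (fun s => e (c, s))),
        fun p q => w (d q).1 (row p (d q).1) (d q).2,
        fun q => x (d q).1 (d q).2, ?_, ?_, ?_⟩
      · intro C _ _ y p p'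
        have key : ∀ p : Fin (k * Mb),
            (Term.func F (fun c => (W c (row p c)).relabel (fun s => e (c, s)))).realize
              (fun q => (w (d q).1 (row p (d q).1) (d q).2).realize (y q)) =
            Structure.funMap F (fun c =>
              (W c z0).realize (fun j => (w c z0 j).realize (y (e (c, j))))) := by
          intro p
          rw [Term.realize_func]
          congr 1
          funext c
          rw [Term.realize_relabel]
          have hcomp : ((fun q => (w (d q).1 (row p (d q).1) (d q).2).realize (y q)) ∘
              (fun s => e (c, s))) =
              fun s => (w c (row p c) s).realize (y (e (c, s))) := by
            funext s
            simp only [Function.comp, hd, Equiv.symm_apply_apply]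
          rw [hcomp]
          exact harr c C (fun j => y (e (c, j))) (row p c) z0
        rw [key p, key p']
      · intro p
        have hrp : row p (d p).1 = (d p).2 := by simp [hrowdef]
        show (w (d p).1 (row p (d p).1) (d p).2).realize (x (d p).1 (d p).2) ∈ B
        rw [hrp]
        exact hdiag (d p).1 (d p).2
      · have hd0 : d ⟨0, hMt⟩ = (⟨0, hk⟩, z0) := by
          rw [hd, Equiv.symm_apply_eq]
          ext
          simp [he, finProdFinEquiv, hz0]
        have hrow0 : ∀ c, row ⟨0, hMt⟩ c = z0 := by
          intro c
          rw [hrowdef]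
          simp only [hd0]
          split <;> rfl
        rw [Term.realize_func]
        congr 1
        funext c
        rw [hrow0, Term.realize_relabel]
        have hcomp : ((fun q => (w (d q).1 (row ⟨0, hMt⟩ (d q).1) (d q).2).realize
            (x (d q).1 (d q).2)) ∘ (fun s => e (c, s))) =
            fun s => (w c z0 s).realize (x c s) := by
          funext s
          simp only [Function.comp, hd, Equiv.symm_apply_apply, hrow0]
        rw [hcomp]
        exact hval c hMbpos
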